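/- Let (G,q) be a metric group with |G| = 4 and let u ∈ G be an element of order 2 with q(u) = -1. Then the two elements of G ∖ {0,u} take the same value ξ under q, ξ is an 8-th root of unity in k, and τ⁺(G,q) = 2ξ. Moreover, if (G',q') is another metric group of order 4 with an element u' of order 2 satisfying q'(u') = -1 and whose two elements outside {0,u'} also take the value ξ under q', then there is an isomorphism of pre-metric groups (G,q) → (G',q') taking u to u'. -/
import Mathlib


/-- The bicharacter associated with a `kˣ`-valued function `q` on `G`:
`b(g,h) = q(g+h) · q(g)⁻¹ · q(h)⁻¹`. -/
def bchar {k : Type*} [Field k] {G : Type*} [AddCommGroup G] (q : G → kˣ) (g h : G) : kˣ :=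
  q (g + h) * (q g)⁻¹ * (q h)⁻¹

/-- `q : G → kˣ` is a quadratic form: `q (-g) = q g` for all `g`, and the associated
function `bchar q` is bimultiplicative. -/
structure IsQuadForm {k : Type*} [Field k] {G : Type*} [AddCommGroup G] (q : G → kˣ) : Prop where
  map_neg : ∀ g : G, q (-g) = q g
  bchar_add_left : ∀ g₁ g₂ h : G, bchar q (g₁ + g₂) h = bchar q g₁ h * bchar q g₂ h
  bchar_add_right : ∀ g h₁ h₂ : G, bchar q g (h₁ + h₂) = bchar q g h₁ * bchar q g h₂

/-- The Gauss sum `τ⁺(G,q) = ∑_{g ∈ G} q(g)`, as an element of `k`. -/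
noncomputable def tauPlus {k : Type*} [Field k] {G : Type*} [AddCommGroup G] (q : G → kˣ) : k :=
  ∑ᶠ g : G, (q g : k)

/-- The Gauss sum `τ⁻(G,q) = ∑_{g ∈ G} q(g)⁻¹`, as an element of `k`. -/
noncomputable def tauMinus {k : Type*} [Field k] {G : Type*} [AddCommGroup G] (q : G → kˣ) : k :=
  ∑ᶠ g : G, (((q g)⁻¹ : kˣ) : k)

/-- Non-degeneracy of (the bicharacter associated with) `q` : the map
`g ↦ b(g, ·)` from `G` to `Hom(G, kˣ)` is injective. -/
def Nondeg {k : Type*} [Field k] {G : Type*} [AddCommGroup G] (q : G → kˣ) : Prop :=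
  Function.Injective fun g : G => fun h : G => bchar q g h

/-- Isomorphism of pre-metric groups: a group isomorphism `φ : G₁ ≃ G₂`
with `q₂ ∘ φ = q₁`. -/
def PMIso {k : Type*} [Field k] {G₁ : Type*} [AddCommGroup G₁] {G₂ : Type*} [AddCommGroup G₂]
    (q₁ : G₁ → kˣ) (q₂ : G₂ → kˣ) : Prop :=
  ∃ φ : G₁ ≃+ G₂, ∀ g : G₁, q₂ (φ g) = q₁ g

section Aux

variable {k : Type*} [Field k] {G : Type*} [AddCommGroup G] {q : G → kˣ}

lemma bchar_symm (q : G → kˣ) (g h : G) : bchar q g h = bchar q h g := by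
  unfold bchar; rw [add_comm g h, mul_right_comm]

lemma IsQuadForm.q_zero (hq : IsQuadForm q) : q 0 = 1 := by
  have h := hq.bchar_add_left 0 0 0
  rw [add_zero] at h
  have h1 : bchar q 0 0 = 1 := left_eq_mul.mp h
  have h2 : bchar q 0 0 = (q 0)⁻¹ := by
    unfold bchar; rw [add_zero]; group
  rw [h2, inv_eq_one] at h1
  exact h1

lemma bchar_zero_left (hq : IsQuadForm q) (h : G) : bchar q 0 h = 1 := by
  unfold bchar; rw [zero_add, hq.q_zero]; group

lemma bchar_zero_right (hq : IsQuadForm q) (g : G) : bchar q g 0 = 1 := by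
  rw [bchar_symm]; exact bchar_zero_left hq g

lemma q_add (q : G → kˣ) (g h : G) : q (g + h) = bchar q g h * q g * q h := by
  unfold bchar
  rw [mul_right_comm (q (g + h) * (q g)⁻¹) (q h)⁻¹ (q g), inv_mul_cancel_right,
    inv_mul_cancel_right]

lemma unit_sq {x : kˣ} (h : x * x = 1) : x = 1 ∨ x = -1 := by
  have h' : (x : k) * (x : k) = 1 := by
    have := congrArg (Units.val) h
    push_cast at this
    exact this
  rcases mul_self_eq_one_iff.mp h' with h1 | h1
  · exact Or.inl (Units.ext (by simpa using h1))
  · exact Or.inr (Units.ext (by simpa using h1))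

end Aux

section Analysis

lemma analysis {k : Type*} [Field k] [CharZero k] {G : Type*} [AddCommGroup G] [Finite G]
    (q : G → kˣ) (hq : IsQuadForm q) (hnd : Nondeg q) (hcard : Nat.card G = 4)
    (u : G) (hu : addOrderOf u = 2) (hqu : q u = -1) :
    ∃ a : G, a ≠ 0 ∧ a ≠ u ∧ u ≠ 0 ∧ u + u = 0 ∧
      (∀ x : G, x = 0 ∨ x = u ∨ x = a ∨ x = a + u) ∧
      q (a + u) = q a ∧
      ((a + a = 0 ∧ ((q a : k)) ^ 4 = 1) ∨ (a + a = u ∧ ((q a : k)) ^ 4 = -1)) := by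
  classical
  have hfin : Fintype G := Fintype.ofFinite G
  have hu0 : u ≠ 0 := by
    intro h; rw [h, addOrderOf_zero] at hu; omega
  have huu : u + u = 0 := by
    have h := addOrderOf_nsmul_eq_zero u
    rw [hu, two_nsmul] at h; exact h
  have hnegu : -u = u := neg_eq_of_add_eq_zero_left huu
  obtain ⟨a, ha0, hau⟩ : ∃ a : G, a ≠ 0 ∧ a ≠ u := by
    by_contra hcon
    push_neg at hcon
    have hsub : (Finset.univ : Finset G) ⊆ {0, u} := by
      intro x _
      rcases eq_or_ne x 0 with hx | hx
      · simp [hx]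
      · simp [hcon x hx]
    have h1 := Finset.card_le_card hsub
    have h2 : ({0, u} : Finset G).card ≤ 2 :=
      (Finset.card_insert_le _ _).trans (by simp)
    rw [Finset.card_univ, ← Nat.card_eq_fintype_card, hcard] at h1
    omega
  have hb0 : a + u ≠ 0 := by
    intro h
    exact hau (by rw [← hnegu]; exact eq_neg_of_add_eq_zero_left h)
  have hbu : a + u ≠ u := by
    intro h; exact ha0 (add_eq_right.mp h)
  have hba : a + u ≠ a := by
    intro h; exact hu0 (add_eq_left.mp h)
  have huniv : ∀ x : G, x = 0 ∨ x = u ∨ x = a ∨ x = a + u := by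
    have e1 : (0 : G) ∉ ({u, a, a + u} : Finset G) := by
      simp only [Finset.mem_insert, Finset.mem_singleton]
      push_neg
      exact ⟨Ne.symm hu0, Ne.symm ha0, fun h => hb0 h.symm⟩
    have e2 : u ∉ ({a, a + u} : Finset G) := by
      simp only [Finset.mem_insert, Finset.mem_singleton]
      push_neg
      exact ⟨Ne.symm hau, fun h => hbu h.symm⟩
    have e3 : a ∉ ({a + u} : Finset G) := by
      simp only [Finset.mem_singleton]
      exact fun h => hba h.symm
    have hcard4 : ({0, u, a, a + u} : Finset G).card = 4 := by
      rw [Finset.card_insert_of_notMem e1, Finset.card_insert_of_notMem e2,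
        Finset.card_insert_of_notMem e3, Finset.card_singleton]
    have hset : ({0, u, a, a + u} : Finset G) = Finset.univ :=
      Finset.eq_univ_of_card _
        (by rw [hcard4, ← Nat.card_eq_fintype_card, hcard])
    intro x
    have hx : x ∈ ({0, u, a, a + u} : Finset G) := hset ▸ Finset.mem_univ x
    simpa using hx
  have hbuu : bchar q u u = 1 := by
    unfold bchar
    rw [huu, hq.q_zero, hqu]
    simp
  have hbua : bchar q u a = -1 := by
    have hsq : bchar q u a * bchar q u a = 1 := by
      rw [← hq.bchar_add_left, huu, bchar_zero_left hq]
    rcases unit_sq hsq with h1 | h1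
    · exfalso
      apply hu0
      apply hnd
      funext x
      show bchar q u x = bchar q 0 x
      rcases huniv x with rfl | rfl | rfl | rfl
      · rw [bchar_zero_right hq, bchar_zero_right hq]
      · rw [hbuu, bchar_zero_left hq]
      · rw [h1, bchar_zero_left hq]
      · rw [hq.bchar_add_right, h1, hbuu, bchar_zero_left hq, one_mul]
    · exact h1
  have hqau : q (a + u) = q a := by
    rw [add_comm a u, q_add q u a, hbua, hqu]
    simp
  refine ⟨a, ha0, hau, hu0, huu, huniv, hqau, ?_⟩
  have hbsq4 : bchar q (a + a) a = bchar q a a * bchar q a a := hq.bchar_add_left a a a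
  rcases huniv (-a) with hna | hna | hna | hna
  · exact absurd (neg_eq_zero.mp hna) ha0
  · exfalso
    apply hau
    rw [← hnegu] at hna
    exact neg_injective hna
  · -- Klein case
    have haa : a + a = 0 := neg_eq_iff_add_eq_zero.mp hna
    left
    refine ⟨haa, ?_⟩
    have hb2 : bchar q a a * bchar q a a = 1 := by
      rw [← hbsq4, haa, bchar_zero_left hq]
    have h1 : bchar q a a * q a * q a = 1 := by rw [← q_add, haa, hq.q_zero]
    have hb2k : (bchar q a a : k) * (bchar q a a : k) = 1 := by
      have := congrArg (Units.val) hb2; push_cast at this; exact this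
    have h1k : (bchar q a a : k) * (q a : k) * (q a : k) = 1 := by
      have := congrArg (Units.val) h1; push_cast at this; exact this
    linear_combination ((bchar q a a : k) * (q a : k) * (q a : k) + 1) * h1k
      - ((q a : k)) ^ 4 * hb2k
  · -- cyclic case
    have haa : a + a = u := by
      have h0 : a + a + u = 0 := by
        rw [add_assoc, ← hna]
        simp
      have := eq_neg_of_add_eq_zero_left h0
      rw [hnegu] at this
      exact this
    right
    refine ⟨haa, ?_⟩
    have hb2 : bchar q a a * bchar q a a = -1 := by
      rw [← hbsq4, haa]; exact hbua
    have h1 : bchar q a a * q a * q a = -1 := by rw [← q_add, haa, hqu]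
    have hb2k : (bchar q a a : k) * (bchar q a a : k) = -1 := by
      have := congrArg (Units.val) hb2; push_cast at this; exact this
    have h1k : (bchar q a a : k) * (q a : k) * (q a : k) = -1 := by
      have := congrArg (Units.val) h1; push_cast at this; exact this
    linear_combination ((q a : k)) ^ 4 * hb2k
      + (1 - (bchar q a a : k) * (q a : k) * (q a : k)) * h1k

end Analysis

section Equivs

lemma cyclic_equiv {G : Type*} [AddCommGroup G] [Finite G] (hc : Nat.card G = 4)
    (a : G) (h4 : a + a + (a + a) = 0)
    (huniv : ∀ x : G, x = 0 ∨ x = a + a ∨ x = a ∨ x = a + (a + a)) :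
    ∃ e : ZMod 4 ≃+ G, e 1 = a := by
  have hz : (zmultiplesHom G a) (4 : ℤ) = 0 := by
    show (4 : ℤ) • a = 0
    rw [show (4 : ℤ) = 2 + 2 by norm_num, add_zsmul, two_zsmul]
    exact h4
  set f : ZMod 4 →+ G := ZMod.lift 4 ⟨zmultiplesHom G a, hz⟩ with hf
  have hf1 : f 1 = a := by
    have h : ((1 : ℤ) : ZMod 4) = 1 := by norm_num
    rw [← h, hf, ZMod.lift_coe]
    show (1 : ℤ) • a = a
    simp
  have hf2 : f 2 = a + a := by
    rw [show (2 : ZMod 4) = 1 + 1 by decide, map_add, hf1]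
  have hf3 : f 3 = a + (a + a) := by
    rw [show (3 : ZMod 4) = 1 + (1 + 1) by decide, map_add, map_add, hf1]
  have hsurj : Function.Surjective f := by
    intro x
    rcases huniv x with rfl | rfl | rfl | rfl
    exacts [⟨0, map_zero f⟩, ⟨2, hf2⟩, ⟨1, hf1⟩, ⟨3, hf3⟩]
  have hbij : Function.Bijective f := by
    rw [Nat.bijective_iff_surjective_and_card]
    exact ⟨hsurj, by simp [Nat.card_zmod, hc]⟩
  exact ⟨AddEquiv.ofBijective f hbij, hf1⟩

lemma klein_equiv {G : Type*} [AddCommGroup G] [Finite G] (hc : Nat.card G = 4)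
    (u a : G) (hu2 : u + u = 0) (ha2 : a + a = 0)
    (huniv : ∀ x : G, x = 0 ∨ x = u ∨ x = a ∨ x = a + u) :
    ∃ e : (ZMod 2 × ZMod 2) ≃+ G, e (1, 0) = u ∧ e (0, 1) = a := by
  have hzu : (zmultiplesHom G u) (2 : ℤ) = 0 := by
    show (2 : ℤ) • u = 0
    rw [two_zsmul]; exact hu2
  have hza : (zmultiplesHom G a) (2 : ℤ) = 0 := by
    show (2 : ℤ) • a = 0
    rw [two_zsmul]; exact ha2
  set f1 : ZMod 2 →+ G := ZMod.lift 2 ⟨zmultiplesHom G u, hzu⟩ with hfd1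
  set f2 : ZMod 2 →+ G := ZMod.lift 2 ⟨zmultiplesHom G a, hza⟩ with hfd2
  have hf1 : f1 1 = u := by
    have h : ((1 : ℤ) : ZMod 2) = 1 := by norm_num
    rw [← h, hfd1, ZMod.lift_coe]
    show (1 : ℤ) • u = u
    simp
  have hf2 : f2 1 = a := by
    have h : ((1 : ℤ) : ZMod 2) = 1 := by norm_num
    rw [← h, hfd2, ZMod.lift_coe]
    show (1 : ℤ) • a = a
    simp
  set f : ZMod 2 × ZMod 2 →+ G := f1.coprod f2 with hfd
  have hfa : ∀ p : ZMod 2 × ZMod 2, f p = f1 p.1 + f2 p.2 := fun p => rfl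
  have hv10 : f (1, 0) = u := by rw [hfa]; simp [hf1]
  have hv01 : f (0, 1) = a := by rw [hfa]; simp [hf2]
  have hv11 : f (1, 1) = a + u := by rw [hfa]; simp [hf1, hf2, add_comm]
  have hsurj : Function.Surjective f := by
    intro x
    rcases huniv x with rfl | rfl | rfl | rfl
    exacts [⟨0, map_zero f⟩, ⟨(1, 0), hv10⟩, ⟨(0, 1), hv01⟩, ⟨(1, 1), hv11⟩]
  have hbij : Function.Bijective f := by
    rw [Nat.bijective_iff_surjective_and_card]
    refine ⟨hsurj, ?_⟩
    simp [Nat.card_prod, Nat.card_zmod, hc]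
  exact ⟨AddEquiv.ofBijective f hbij, hv10, hv01⟩

end Equivs

/-- Let `(G,q)` be a metric group of order `4` and `u ∈ G` of order `2`
with `q(u) = -1`. Then the two elements of `G ∖ {0,u}` take a common value `ξ` under `q`,
`ξ⁸ = 1`, `τ⁺(G,q) = 2ξ`, and any other such triple `(G',q',u')` with the same value `ξ`
is isomorphic to `(G,q,u)`. -/
theorem order_four_metric_group_with_u
    {k : Type*} [Field k] [IsAlgClosed k] [CharZero k]
    {G : Type*} [AddCommGroup G] [Finite G]
    (q : G → kˣ) (hq : IsQuadForm q) (hnd : Nondeg q)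
    (hcard : Nat.card G = 4)
    (u : G) (hu : addOrderOf u = 2) (hqu : q u = -1) :
    ∃ ξ : kˣ,
      (∀ g : G, g ≠ 0 → g ≠ u → q g = ξ) ∧
      ξ ^ 8 = 1 ∧
      tauPlus q = 2 * (ξ : k) ∧
      ∀ (G' : Type*) [AddCommGroup G'] [Finite G'] (q' : G' → kˣ) (u' : G'),
        IsQuadForm q' → Nondeg q' → Nat.card G' = 4 →
        addOrderOf u' = 2 → q' u' = -1 →
        (∀ g : G', g ≠ 0 → g ≠ u' → q' g = ξ) →
        ∃ φ : G ≃+ G', (∀ g : G, q' (φ g) = q g) ∧ φ u = u' := by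
  classical
  obtain ⟨a, ha0, hau, hu0, huu, huniv, hqau, hdich⟩ := analysis q hq hnd hcard u hu hqu
  refine ⟨q a, ?_, ?_, ?_, ?_⟩
  · -- common value
    intro g hg0 hgu
    rcases huniv g with rfl | rfl | rfl | rfl
    · exact absurd rfl hg0
    · exact absurd rfl hgu
    · rfl
    · exact hqau
  · -- eighth root of unity
    refine Units.ext ?_
    push_cast
    have hk : ((q a : k)) ^ 8 = (((q a : k)) ^ 4) ^ 2 := by ring
    rcases hdich with ⟨-, h⟩ | ⟨-, h⟩ <;> rw [hk, h] <;> norm_num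
  · -- Gauss sum
    have hfin : Fintype G := Fintype.ofFinite G
    have hb0 : a + u ≠ 0 := by
      intro h
      have hnegu : -u = u := neg_eq_of_add_eq_zero_left huu
      exact hau (by rw [← hnegu]; exact eq_neg_of_add_eq_zero_left h)
    have hbu : a + u ≠ u := by
      intro h; exact ha0 (add_eq_right.mp h)
    have hba : a + u ≠ a := by
      intro h; exact hu0 (add_eq_left.mp h)
    have e1 : (0 : G) ∉ ({u, a, a + u} : Finset G) := by
      simp only [Finset.mem_insert, Finset.mem_singleton]
      push_neg
      exact ⟨Ne.symm hu0, Ne.symm ha0, fun h => hb0 h.symm⟩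
    have e2 : u ∉ ({a, a + u} : Finset G) := by
      simp only [Finset.mem_insert, Finset.mem_singleton]
      push_neg
      exact ⟨Ne.symm hau, fun h => hbu h.symm⟩
    have e3 : a ∉ ({a + u} : Finset G) := by
      simp only [Finset.mem_singleton]
      exact fun h => hba h.symm
    have hset : (Finset.univ : Finset G) = ({0, u, a, a + u} : Finset G) := by
      symm
      apply Finset.eq_univ_of_card
      rw [Finset.card_insert_of_notMem e1, Finset.card_insert_of_notMem e2,
        Finset.card_insert_of_notMem e3, Finset.card_singleton,
        ← Nat.card_eq_fintype_card, hcard]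
    rw [tauPlus, finsum_eq_sum_of_fintype, hset,
      Finset.sum_insert e1, Finset.sum_insert e2, Finset.sum_insert e3,
      Finset.sum_singleton, hq.q_zero, hqu, hqau]
    push_cast
    ring
  · -- uniqueness
    intro G' _ _ q' u' hq' hnd' hcard' hu' hqu' hval'
    obtain ⟨a', ha0', hau', hu0', huu', huniv', hqau', hdich'⟩ :=
      analysis q' hq' hnd' hcard' u' hu' hqu'
    have hqa' : q' a' = q a := hval' a' ha0' hau'
    have hqa'k : ((q' a' : k)) = ((q a : k)) := congrArg Units.val hqa'
    have hone : (1 : k) ≠ -1 := by norm_num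
    rcases hdich with ⟨haa, hx⟩ | ⟨haa, hx⟩
    · -- Klein case
      rcases hdich' with ⟨haa', hx'⟩ | ⟨haa', hx'⟩
      · obtain ⟨e, he1, he2⟩ := klein_equiv hcard u a huu haa huniv
        obtain ⟨e', he1', he2'⟩ := klein_equiv hcard' u' a' huu' haa' huniv'
        set φ : G ≃+ G' := e.symm.trans e' with hφ
        have hφu : φ u = u' := by
          have hsu : e.symm u = (1, 0) := by
            rw [AddEquiv.symm_apply_eq]; exact he1.symm
          show e' (e.symm u) = u'
          rw [hsu]; exact he1'
        have hφa : φ a = a' := by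
          have hsa : e.symm a = (0, 1) := by
            rw [AddEquiv.symm_apply_eq]; exact he2.symm
          show e' (e.symm a) = a'
          rw [hsa]; exact he2'
        refine ⟨φ, ?_, hφu⟩
        intro g
        rcases huniv g with rfl | rfl | rfl | rfl
        · rw [map_zero, hq'.q_zero, hq.q_zero]
        · rw [hφu, hqu', hqu]
        · rw [hφa, hqa']
        · rw [map_add, hφa, hφu, hqau', hqau, hqa']
      · exfalso
        rw [hqa'k, hx] at hx'
        exact hone hx'
    · -- cyclic case
      rcases hdich' with ⟨haa', hx'⟩ | ⟨haa', hx'⟩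
      · exfalso
        rw [hqa'k, hx] at hx'
        exact hone hx'.symm
      · have huniv2 : ∀ x : G, x = 0 ∨ x = a + a ∨ x = a ∨ x = a + (a + a) := by
          intro x; rw [haa]; exact huniv x
        have huniv2' : ∀ x : G', x = 0 ∨ x = a' + a' ∨ x = a' ∨ x = a' + (a' + a') := by
          intro x; rw [haa']; exact huniv' x
        have h4 : a + a + (a + a) = 0 := by rw [haa]; exact huu
        have h4' : a' + a' + (a' + a') = 0 := by rw [haa']; exact huu'
        obtain ⟨e, he1⟩ := cyclic_equiv hcard a h4 huniv2
        obtain ⟨e', he1'⟩ := cyclic_equiv hcard' a' h4' huniv2'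
        set φ : G ≃+ G' := e.symm.trans e' with hφ
        have hφa : φ a = a' := by
          have hsa : e.symm a = 1 := by
            rw [AddEquiv.symm_apply_eq]; exact he1.symm
          show e' (e.symm a) = a'
          rw [hsa]; exact he1'
        have hφu : φ u = u' := by
          rw [← haa, map_add, hφa, haa']
        refine ⟨φ, ?_, hφu⟩
        intro g
        rcases huniv g with rfl | rfl | rfl | rfl
        · rw [map_zero, hq'.q_zero, hq.q_zero]
        · rw [hφu, hqu', hqu]
        · rw [hφa, hqa']
        · rw [map_add, hφa, hφu, hqau', hqau, hqa']
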